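/- If Σ a_n is a divergent series of positive real numbers, then the continued fraction 1/(a_1 z + 1/(a_2 + 1/(a_3 z + 1/(a_4 + ...)))) converges for every real z > 0. -/

import Mathlib

open Filter

/-- Partial denominators of the Stieltjes continued fraction: `a k * z` for odd `k`,
`a k` for even `k ≥ 2` (all partial numerators are `1`). -/
noncomputable def stielQ (a : ℕ → ℝ) (z : ℝ) (k : ℕ) : ℝ :=
  if k % 2 = 1 then a k * z else a k

/-- Numerators of the convergents (`stielA a z (k+1)` is `A_k`, `A_{-1} = 1`, `A_0 = 0`). -/
noncomputable def stielA (a : ℕ → ℝ) (z : ℝ) : ℕ → ℝ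
  | 0 => 1
  | 1 => 0
  | n + 2 => stielQ a z (n + 1) * stielA a z (n + 1) + stielA a z n

/-- Denominators of the convergents (`stielB a z (k+1)` is `B_k`, `B_{-1} = 0`, `B_0 = 1`). -/
noncomputable def stielB (a : ℕ → ℝ) (z : ℝ) : ℕ → ℝ
  | 0 => 0
  | 1 => 1
  | n + 2 => stielQ a z (n + 1) * stielB a z (n + 1) + stielB a z n

section aux

variable (a : ℕ → ℝ) (z : ℝ)

lemma stielQ_pos (ha : ∀ n, 1 ≤ n → 0 < a n) (hz : 0 < z) (k : ℕ) (hk : 1 ≤ k) :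
    0 < stielQ a z k := by
  unfold stielQ
  split_ifs
  · exact mul_pos (ha k hk) hz
  · exact ha k hk

lemma stielB_nonneg_pos (ha : ∀ n, 1 ≤ n → 0 < a n) (hz : 0 < z) :
    ∀ n, 0 ≤ stielB a z n ∧ 0 < stielB a z (n + 1) := by
  intro n
  induction n with
  | zero => simp [stielB]
  | succ n ih =>
    refine ⟨ih.2.le, ?_⟩
    show 0 < stielB a z (n + 2)
    rw [show stielB a z (n + 2) = stielQ a z (n+1) * stielB a z (n+1) + stielB a z n from rfl]
    have hq := stielQ_pos a z ha hz (n + 1) (Nat.le_add_left 1 n)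
    nlinarith [ih.1, ih.2]

lemma stielB_pos (ha : ∀ n, 1 ≤ n → 0 < a n) (hz : 0 < z) (n : ℕ) :
    0 < stielB a z (n + 1) := (stielB_nonneg_pos a z ha hz n).2

lemma stielB_step (ha : ∀ n, 1 ≤ n → 0 < a n) (hz : 0 < z) (n : ℕ) :
    stielB a z n ≤ stielB a z (n + 2) := by
  rw [show stielB a z (n + 2) = stielQ a z (n+1) * stielB a z (n+1) + stielB a z n from rfl]
  have hq := stielQ_pos a z ha hz (n + 1) (Nat.le_add_left 1 n)
  nlinarith [stielB_pos a z ha hz n]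

lemma stiel_det (n : ℕ) :
    stielA a z (n + 1) * stielB a z n - stielA a z n * stielB a z (n + 1)
      = (-1 : ℝ) ^ (n + 1) := by
  induction n with
  | zero => simp [stielA, stielB]
  | succ n ih =>
    rw [show stielA a z (n + 2) = stielQ a z (n+1) * stielA a z (n+1) + stielA a z n from rfl,
        show stielB a z (n + 2) = stielQ a z (n+1) * stielB a z (n+1) + stielB a z n from rfl,
        pow_succ]
    nlinarith [ih]

lemma stiel_conv_eq_sum (ha : ∀ n, 1 ≤ n → 0 < a n) (hz : 0 < z) (N : ℕ) :
    stielA a z (N + 1) / stielB a z (N + 1)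
      = ∑ n ∈ Finset.range N, (-1 : ℝ) ^ n * (1 / (stielB a z (n + 1) * stielB a z (n + 2))) := by
  induction N with
  | zero => simp [stielA, stielB]
  | succ N ih =>
    rw [Finset.sum_range_succ, ← ih]
    have h1 := stielB_pos a z ha hz N
    have h2 := stielB_pos a z ha hz (N + 1)
    have hd := stiel_det a z (N + 1)
    simp only [show N + 1 + 1 = N + 2 from rfl] at *
    have hpow : (-1 : ℝ) ^ (N + 2) = (-1 : ℝ) ^ N := by
      rw [pow_succ, pow_succ]; ring
    rw [hpow] at hd
    field_simp
    linear_combination hd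

end aux

/-- Stieltjes' convergence theorem: if `Σ a_n` diverges (`a_n > 0`), the continued fraction
`1/(a₁z + 1/(a₂ + 1/(a₃z + …)))` converges for every real `z > 0`. -/
theorem stmt15 (a : ℕ → ℝ) (ha : ∀ n, 1 ≤ n → 0 < a n)
    (hdiv : ¬ Summable fun n => a (n + 1)) (z : ℝ) (hz : 0 < z) :
    ∃ L : ℝ, Tendsto (fun n => stielA a z (n + 1) / stielB a z (n + 1)) atTop (nhds L) := by
  set B := stielB a z with hB
  set f : ℕ → ℝ := fun n => 1 / (B (n + 1) * B (n + 2)) with hf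
  have hBpos : ∀ n, 0 < B (n + 1) := stielB_pos a z ha hz
  have hBstep : ∀ n, B n ≤ B (n + 2) := stielB_step a z ha hz
  -- f is antitone
  have hanti : Antitone f := by
    apply antitone_nat_of_succ_le
    intro n
    have h1 := hBpos n
    have h2 := hBpos (n + 1)
    have h3 := hBpos (n + 2)
    apply one_div_le_one_div_of_le (by positivity)
    have := hBstep (n + 1)
    nlinarith
  -- lower bound constant c for B (n+1)
  set c : ℝ := min 1 (a 1 * z) with hc
  have hcpos : 0 < c := lt_min one_pos (mul_pos (ha 1 le_rfl) hz)
  have hBc : ∀ n, c ≤ B (n + 1) := by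
    intro n
    induction n using Nat.strong_induction_on with
    | _ n ih =>
      match n with
      | 0 => exact le_of_le_of_eq (min_le_left 1 (a 1 * z)) rfl
      | 1 =>
        have : B 2 = a 1 * z := by
          simp [hB, stielB, stielQ]
        rw [show (1:ℕ) + 1 = 2 from rfl, this]
        exact min_le_right 1 (a 1 * z)
      | (m + 2) =>
        calc c ≤ B (m + 1) := ih m (by omega)
          _ ≤ B (m + 3) := hBstep (m + 1)
  -- sums S n = B(n+1) + B(n+2) tend to infinity
  set m : ℝ := min z 1 with hm
  have hmpos : 0 < m := lt_min hz one_pos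
  have hq_ge : ∀ k, 1 ≤ k → m * a k ≤ stielQ a z k := by
    intro k hk
    have hak := ha k hk
    unfold stielQ
    split_ifs
    · calc m * a k ≤ z * a k := by nlinarith [min_le_left z 1]
        _ = a k * z := mul_comm _ _
    · nlinarith [min_le_right z 1]
  have hSstep : ∀ n, B (n + 1) + B (n + 2) + c * (m * a (n + 2)) ≤ B (n + 2) + B (n + 3) := by
    intro n
    have : B (n + 3) = stielQ a z (n + 2) * B (n + 2) + B (n + 1) := rfl
    have hq := hq_ge (n + 2) (by omega)
    have hqp := stielQ_pos a z ha hz (n + 2) (by omega)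
    nlinarith [hBpos (n + 1), hBc (n + 1)]
  have hSsum : ∀ n, c * m * (∑ k ∈ Finset.range n, a (k + 2)) ≤ B (n + 1) + B (n + 2) := by
    intro n
    induction n with
    | zero => simp; nlinarith [hBpos 0, hBpos 1]
    | succ n ih =>
      rw [Finset.sum_range_succ]
      have := hSstep n
      nlinarith
  have hsum_top : Tendsto (fun n => ∑ k ∈ Finset.range n, a (k + 2)) atTop atTop := by
    have hns : ¬ Summable fun k => a (k + 2) := by
      intro h
      exact hdiv (((summable_nat_add_iff 1).mp (by simpa using h)))
    exact (not_summable_iff_tendsto_nat_atTop_of_nonneg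
      (fun k => (ha (k + 2) (by omega)).le)).mp hns
  -- B(n+1)*B(n+2) → ∞
  have hprod_top : Tendsto (fun n => B (n + 1) * B (n + 2)) atTop atTop := by
    apply tendsto_atTop_mono (f := fun n => c / 2 * (B (n + 1) + B (n + 2)))
    · intro n
      have h1 := hBc n
      have h2 := hBc (n + 1)
      have h3 := hBpos n
      have h4 := hBpos (n + 1)
      nlinarith
    · apply Tendsto.const_mul_atTop (by positivity)
      apply tendsto_atTop_mono hSsum
      exact Tendsto.const_mul_atTop (by positivity) hsum_top
  have hf0 : Tendsto f atTop (nhds 0) := by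
    have h := hprod_top.inv_tendsto_atTop
    have hfe : f = fun n => (B (n + 1) * B (n + 2))⁻¹ := by
      funext n; simp [hf, one_div]
    rw [hfe]; exact h
  obtain ⟨L, hL⟩ := hanti.tendsto_alternating_series_of_tendsto_zero hf0
  refine ⟨L, ?_⟩
  have : (fun n => stielA a z (n + 1) / stielB a z (n + 1))
      = fun n => ∑ k ∈ Finset.range n, (-1 : ℝ) ^ k * f k := by
    funext n
    exact stiel_conv_eq_sum a z ha hz n
  rw [this]
  exact hL
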